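/- arXiv:math/0509310 — 5 statements merged into one kernel-verified Lean document; each statement's English description precedes it below -/
import Mathlib

section
/- Let Φ = {Φ(t)} be a discrete-time Markov chain with transition kernel P satisfying (DV3): log(Pe^V) - V ≤ -δW + b·1_C with V : X → (0,∞], W ≥ 1, δ > 0, b < ∞. Then the process m(t) := exp(V(Φ(t)) + Σ_{s=0}^{t-1} [δW(Φ(s)) - b·1_C(Φ(s))]), t ≥ 0, is a supermartingale with respect to the natural filtration F_t = σ(Φ(s) : 0 ≤ s ≤ t), for any initial condition Φ(0) = x with V(x) < ∞. -/
open MeasureTheory ProbabilityTheory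

/-- Under (DV3), the process
`m(t) = exp(V(Φ(t)) + Σ_{s<t} [δ W(Φ(s)) − b 1_C(Φ(s))])` is a supermartingale with
respect to the natural filtration of the Markov chain `Φ` started at `x`. -/
theorem stmt3 {X : Type*} [MeasurableSpace X]
    {Ω : Type*} {mΩ : MeasurableSpace Ω}
    (μ : Measure Ω) [IsProbabilityMeasure μ]
    (ℱ : Filtration ℕ mΩ)
    (P : Kernel X X) [IsMarkovKernel P]
    (Φ : ℕ → Ω → X)
    (hAdapted : ∀ t, Measurable[ℱ t] (Φ t))
    (x : X) (hx : ∀ ω, Φ 0 ω = x)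
    (hMarkov : ∀ (t : ℕ) (g : X → ℝ), Measurable g → (∀ y, |g y| ≤ 1) →
      (μ[fun ω => g (Φ (t + 1) ω)|ℱ t]) =ᵐ[μ] fun ω => ∫ y, g y ∂(P (Φ t ω)))
    (V W : X → ℝ) (C : Set X) (δ b : ℝ)
    (hV : ∀ z, 0 < V z) (hW : ∀ z, 1 ≤ W z) (hδ : 0 < δ)
    (hVmeas : Measurable V) (hWmeas : Measurable W) (hC : MeasurableSet C)
    (hIntExpV : ∀ z, Integrable (fun y => Real.exp (V y)) (P z))
    (hDV3 : ∀ z, ∫ y, Real.exp (V y) ∂(P z)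
        ≤ Real.exp (V z - δ * W z + b * C.indicator (1 : X → ℝ) z)) :
    Supermartingale
      (fun t ω => Real.exp (V (Φ t ω)
        + ∑ s ∈ Finset.range t,
            (δ * W (Φ s ω) - b * C.indicator (1 : X → ℝ) (Φ s ω))))
      ℱ μ := by
  classical
  set ind : X → ℝ := C.indicator (1 : X → ℝ) with hind_def
  set m : ℕ → Ω → ℝ := fun t ω => Real.exp (V (Φ t ω)
      + ∑ s ∈ Finset.range t, (δ * W (Φ s ω) - b * ind (Φ s ω))) with hm_def
  -- basic facts about the indicator
  have hindmeas : Measurable ind := measurable_one.indicator hC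
  -- measurability of Φ in the ambient σ-algebra
  have hΦmeas : ∀ t, Measurable (Φ t) := fun t => (hAdapted t).mono (ℱ.le t) le_rfl
  -- drift condition consequence : δ W z - b ind z ≤ V z
  have hU_le_V : ∀ z, δ * W z - b * ind z ≤ V z := by
    intro z
    have h1 : (1 : ℝ) ≤ ∫ y, Real.exp (V y) ∂(P z) := by
      have hconst : ∫ (_ : X), (1 : ℝ) ∂(P z) = 1 := by simp
      rw [← hconst]
      exact integral_mono (integrable_const 1) (hIntExpV z)
        (fun y => Real.one_le_exp (hV y).le)
    have h2 := h1.trans (hDV3 z)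
    rw [Real.one_le_exp_iff] at h2
    linarith
  -- measurability of m t w.r.t. ℱ t
  have hΦmeasF : ∀ s t : ℕ, s ≤ t → Measurable[ℱ t] (Φ s) := fun s t hst =>
    (hAdapted s).mono (ℱ.mono hst) le_rfl
  have hm_measF : ∀ t, Measurable[ℱ t] (m t) := by
    intro t
    apply Measurable.exp
    apply Measurable.add
    · exact hVmeas.comp (hAdapted t)
    · apply Finset.measurable_sum
      intro s hs
      have h := hΦmeasF s t (Nat.lt_succ_iff.mp (Nat.lt_succ_of_lt (Finset.mem_range.mp hs)))
      exact ((hWmeas.comp h).const_mul δ).sub ((hindmeas.comp h).const_mul b)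
  have hm_meas : ∀ t, Measurable (m t) := fun t => (hm_measF t).mono (ℱ.le t) le_rfl
  have hm_pos : ∀ t ω, 0 < m t ω := fun t ω => Real.exp_pos _
  -- truncations of exp ∘ V
  set g : ℕ → X → ℝ := fun n y => min (Real.exp (V y)) (n + 1) with hg_def
  have hg_meas : ∀ n, Measurable (g n) := fun n => (hVmeas.exp).min measurable_const
  have hg_nonneg : ∀ n y, 0 ≤ g n y := fun n y =>
    le_min (Real.exp_pos _).le (by positivity)
  have hg_le : ∀ n y, g n y ≤ n + 1 := fun n y => min_le_right _ _
  have hg_leexp : ∀ n y, g n y ≤ Real.exp (V y) := fun n y => min_le_left _ _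
  have hg_mono : ∀ y, Monotone fun n : ℕ => g n y := by
    intro y n k hnk
    exact min_le_min le_rfl (by exact_mod_cast add_le_add_left (Nat.cast_le.mpr hnk) 1)
  have hg_tendsto : ∀ y, Filter.Tendsto (fun n : ℕ => g n y)
      Filter.atTop (nhds (Real.exp (V y))) := by
    intro y
    apply tendsto_atTop_of_eventually_const (i₀ := ⌈Real.exp (V y)⌉₊)
    intro n hn
    apply min_eq_left
    calc Real.exp (V y) ≤ (⌈Real.exp (V y)⌉₊ : ℝ) := Nat.le_ceil _
      _ ≤ (n : ℝ) := Nat.cast_le.mpr hn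
      _ ≤ (n : ℝ) + 1 := by linarith
  have hg_int : ∀ n z, Integrable (g n) (P z) := by
    intro n z
    refine Integrable.mono' (integrable_const ((n : ℝ) + 1)) (hg_meas n).aestronglyMeasurable ?_
    exact Filter.Eventually.of_forall fun y => by
      rw [Real.norm_eq_abs, abs_of_nonneg (hg_nonneg n y)]; exact hg_le n y
  -- measurability of z ↦ ∫ g n dP z
  have hker_meas : ∀ n, StronglyMeasurable fun z => ∫ y, g n y ∂(P z) := by
    intro n
    exact MeasureTheory.StronglyMeasurable.integral_kernel_prod_right
      (f := fun (_ : X) y => g n y) (((hg_meas n).comp measurable_snd).stronglyMeasurable)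
  -- conditional expectation of g n (Φ (t+1))
  have hcond : ∀ t n, (μ[fun ω => g n (Φ (t + 1) ω)|ℱ t]) =ᵐ[μ]
      fun ω => ∫ y, g n y ∂(P (Φ t ω)) := by
    intro t n
    have hpos : (0 : ℝ) < (n : ℝ) + 1 := by positivity
    have hg' : Measurable fun y => g n y / ((n : ℝ) + 1) := (hg_meas n).div_const _
    have hbd : ∀ y, |g n y / ((n : ℝ) + 1)| ≤ 1 := by
      intro y
      rw [abs_of_nonneg (div_nonneg (hg_nonneg n y) hpos.le), div_le_one hpos]
      exact hg_le n y
    have h := hMarkov t (fun y => g n y / ((n : ℝ) + 1)) hg' hbd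
    have hsmul := condExp_smul (μ := μ) (m := ℱ t) ((n : ℝ) + 1)
      (fun ω => g n (Φ (t + 1) ω) / ((n : ℝ) + 1))
    have heq1 : ((n : ℝ) + 1) • (fun ω => g n (Φ (t + 1) ω) / ((n : ℝ) + 1))
        = fun ω => g n (Φ (t + 1) ω) := by
      funext ω
      simp [smul_eq_mul, mul_div_cancel₀ _ hpos.ne']
    rw [heq1] at hsmul
    refine hsmul.trans ?_
    filter_upwards [h] with ω hω
    simp only [Pi.smul_apply, hω, smul_eq_mul]
    rw [integral_div]
    field_simp
  -- the main step : integrability propagates and the set-integral inequality holds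
  have key : ∀ t, Integrable (m t) μ →
      Integrable (m (t + 1)) μ ∧
      ∀ s : Set Ω, MeasurableSet[ℱ t] s →
        ∫ ω in s, m (t + 1) ω ∂μ ≤ ∫ ω in s, m t ω ∂μ := by
    intro t hInt
    set f : Ω → ℝ := fun ω =>
      Real.exp (∑ s ∈ Finset.range (t + 1), (δ * W (Φ s ω) - b * ind (Φ s ω))) with hf_def
    have hf_measF : Measurable[ℱ t] f := by
      apply Measurable.exp
      apply Finset.measurable_sum
      intro s hs
      have h := hΦmeasF s t (Nat.lt_succ_iff.mp (Finset.mem_range.mp hs))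
      exact ((hWmeas.comp h).const_mul δ).sub ((hindmeas.comp h).const_mul b)
    have hf_meas : Measurable f := hf_measF.mono (ℱ.le t) le_rfl
    have hf_pos : ∀ ω, 0 < f ω := fun ω => Real.exp_pos _
    -- f times the DV3 bound equals m t
    have hfmul : ∀ ω,
        f ω * Real.exp (V (Φ t ω) - δ * W (Φ t ω) + b * ind (Φ t ω)) = m t ω := by
      intro ω
      rw [hf_def, hm_def, ← Real.exp_add]
      congr 1
      rw [Finset.sum_range_succ]
      ring
    have hf_le : ∀ ω, f ω ≤ m t ω := by
      intro ω
      rw [hf_def, hm_def]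
      apply Real.exp_le_exp.mpr
      rw [Finset.sum_range_succ]
      have := hU_le_V (Φ t ω)
      linarith
    have hm1 : ∀ ω, m (t + 1) ω = f ω * Real.exp (V (Φ (t + 1) ω)) := by
      intro ω
      simp only [hm_def, hf_def]
      rw [← Real.exp_add]
      congr 1
      exact add_comm _ _
    -- integrability of f * g n (Φ (t+1))
    have hfG_int : ∀ n, Integrable (fun ω => f ω * g n (Φ (t + 1) ω)) μ := by
      intro n
      refine Integrable.mono' (hInt.const_mul ((n : ℝ) + 1))
        (hf_meas.mul ((hg_meas n).comp (hΦmeas (t + 1)))).aestronglyMeasurable ?_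
      refine Filter.Eventually.of_forall fun ω => ?_
      rw [Real.norm_eq_abs, abs_of_nonneg (mul_nonneg (hf_pos ω).le (hg_nonneg n _))]
      calc f ω * g n (Φ (t + 1) ω) ≤ f ω * ((n : ℝ) + 1) :=
            mul_le_mul_of_nonneg_left (hg_le n _) (hf_pos ω).le
        _ ≤ m t ω * ((n : ℝ) + 1) :=
            mul_le_mul_of_nonneg_right (hf_le ω) (by positivity)
        _ = ((n : ℝ) + 1) * m t ω := mul_comm _ _
    have hG_int : ∀ n, Integrable (fun ω => g n (Φ (t + 1) ω)) μ := by
      intro n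
      refine Integrable.mono' (integrable_const ((n : ℝ) + 1))
        ((hg_meas n).comp (hΦmeas (t + 1))).aestronglyMeasurable ?_
      exact Filter.Eventually.of_forall fun ω => by
        rw [Real.norm_eq_abs, abs_of_nonneg (hg_nonneg n _)]; exact hg_le n _
    -- pull-out property
    have hpull : ∀ n, (μ[fun ω => f ω * g n (Φ (t + 1) ω)|ℱ t]) =ᵐ[μ]
        fun ω => f ω * ∫ y, g n y ∂(P (Φ t ω)) := by
      intro n
      have h1 := condExp_mul_of_stronglyMeasurable_left (μ := μ) (m := ℱ t)
        (f := f) (g := fun ω => g n (Φ (t + 1) ω)) hf_measF.stronglyMeasurable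
        (hfG_int n) (hG_int n)
      refine h1.trans ?_
      filter_upwards [hcond t n] with ω hω
      simp only [Pi.mul_apply, hω]
    -- pointwise bound : f * ∫ g n dP (Φ t) ≤ m t
    have hptwise : ∀ n ω, f ω * ∫ y, g n y ∂(P (Φ t ω)) ≤ m t ω := by
      intro n ω
      have h1 : ∫ y, g n y ∂(P (Φ t ω)) ≤ ∫ y, Real.exp (V y) ∂(P (Φ t ω)) :=
        integral_mono (hg_int n _) (hIntExpV _) (fun y => hg_leexp n y)
      have h2 := (h1.trans (hDV3 (Φ t ω)))
      calc f ω * ∫ y, g n y ∂(P (Φ t ω))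
          ≤ f ω * Real.exp (V (Φ t ω) - δ * W (Φ t ω) + b * ind (Φ t ω)) :=
            mul_le_mul_of_nonneg_left h2 (hf_pos ω).le
        _ = m t ω := hfmul ω
    have hfK_meas : ∀ n, AEStronglyMeasurable
        (fun ω => f ω * ∫ y, g n y ∂(P (Φ t ω))) μ := fun n =>
      (hf_meas.aestronglyMeasurable.mul
        ((hker_meas n).comp_measurable (hΦmeas t)).aestronglyMeasurable)
    have hfK_int : ∀ n, Integrable (fun ω => f ω * ∫ y, g n y ∂(P (Φ t ω))) μ := by
      intro n
      refine Integrable.mono' hInt (hfK_meas n) ?_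
      refine Filter.Eventually.of_forall fun ω => ?_
      rw [Real.norm_eq_abs,
        abs_of_nonneg (mul_nonneg (hf_pos ω).le (integral_nonneg (hg_nonneg n)))]
      exact hptwise n ω
    -- the set-integral inequality for truncations
    have step1 : ∀ n, ∀ s : Set Ω, MeasurableSet[ℱ t] s →
        ∫ ω in s, f ω * g n (Φ (t + 1) ω) ∂μ ≤ ∫ ω in s, m t ω ∂μ := by
      intro n s hs
      have e1 : ∫ ω in s, f ω * g n (Φ (t + 1) ω) ∂μ
          = ∫ ω in s, (μ[fun ω => f ω * g n (Φ (t + 1) ω)|ℱ t]) ω ∂μ :=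
        (setIntegral_condExp (ℱ.le t) (hfG_int n) hs).symm
      have e2 : ∫ ω in s, (μ[fun ω => f ω * g n (Φ (t + 1) ω)|ℱ t]) ω ∂μ
          = ∫ ω in s, f ω * ∫ y, g n y ∂(P (Φ t ω)) ∂μ := by
        apply setIntegral_congr_ae (ℱ.le t s hs)
        filter_upwards [hpull n] with ω hω _
        exact hω
      rw [e1, e2]
      exact setIntegral_mono_on ((hfK_int n).integrableOn) (hInt.integrableOn)
        (ℱ.le t s hs) (fun ω _ => hptwise n ω)
    -- monotone convergence data
    have hmono : ∀ ω, Monotone fun n : ℕ => f ω * g n (Φ (t + 1) ω) := by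
      intro ω n k hnk
      exact mul_le_mul_of_nonneg_left (hg_mono _ hnk) (hf_pos ω).le
    have htend : ∀ ω, Filter.Tendsto (fun n : ℕ => f ω * g n (Φ (t + 1) ω))
        Filter.atTop (nhds (m (t + 1) ω)) := by
      intro ω
      rw [hm1 ω]
      exact (hg_tendsto (Φ (t + 1) ω)).const_mul (f ω)
    -- integrability of m (t+1) via the monotone convergence theorem for lintegrals
    have hIntSucc : Integrable (m (t + 1)) μ := by
      have hlim : Filter.Tendsto
          (fun n : ℕ => ∫⁻ ω, ENNReal.ofReal (f ω * g n (Φ (t + 1) ω)) ∂μ)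
          Filter.atTop (nhds (∫⁻ ω, ENNReal.ofReal (m (t + 1) ω) ∂μ)) := by
        refine lintegral_tendsto_of_tendsto_of_monotone
          (fun n => (hfG_int n).aemeasurable.ennreal_ofReal) ?_ ?_
        · exact Filter.Eventually.of_forall fun ω n k hnk =>
            ENNReal.ofReal_le_ofReal (hmono ω hnk)
        · exact Filter.Eventually.of_forall fun ω =>
            (ENNReal.continuous_ofReal.tendsto _).comp (htend ω)
      have hbd : ∀ n : ℕ, ∫⁻ ω, ENNReal.ofReal (f ω * g n (Φ (t + 1) ω)) ∂μ
          ≤ ENNReal.ofReal (∫ ω, m t ω ∂μ) := by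
        intro n
        rw [← ofReal_integral_eq_lintegral_ofReal (hfG_int n)
          (Filter.Eventually.of_forall fun ω =>
            mul_nonneg (hf_pos ω).le (hg_nonneg n _))]
        apply ENNReal.ofReal_le_ofReal
        have := step1 n Set.univ MeasurableSet.univ
        simpa using this
      have hfin : ∫⁻ ω, ENNReal.ofReal (m (t + 1) ω) ∂μ
          ≤ ENNReal.ofReal (∫ ω, m t ω ∂μ) := le_of_tendsto' hlim hbd
      refine ⟨(hm_meas (t + 1)).aestronglyMeasurable, ?_⟩
      rw [hasFiniteIntegral_iff_ofReal
        (Filter.Eventually.of_forall fun ω => (hm_pos (t + 1) ω).le)]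
      exact lt_of_le_of_lt hfin ENNReal.ofReal_lt_top
    refine ⟨hIntSucc, ?_⟩
    intro s hs
    -- pass to the limit in the truncated inequality
    have hlim : Filter.Tendsto
        (fun n : ℕ => ∫ ω in s, f ω * g n (Φ (t + 1) ω) ∂μ)
        Filter.atTop (nhds (∫ ω in s, m (t + 1) ω ∂μ)) := by
      refine integral_tendsto_of_tendsto_of_monotone
        (fun n => (hfG_int n).restrict) (hIntSucc.restrict) ?_ ?_
      · exact Filter.Eventually.of_forall fun ω => hmono ω
      · exact Filter.Eventually.of_forall fun ω => htend ω
    exact le_of_tendsto' hlim (fun n => step1 n s hs)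
  -- integrability for all t, by induction
  have hIntAll : ∀ t, Integrable (m t) μ := by
    intro t
    induction t with
    | zero =>
      have : m 0 = fun _ => Real.exp (V x) := by
        funext ω
        rw [hm_def]
        simp [hx ω]
      rw [this]
      exact integrable_const _
    | succ t ih => exact (key t ih).1
  -- conclude
  exact supermartingale_of_setIntegral_succ_le
    (fun t => (hm_measF t).stronglyMeasurable)
    hIntAll
    (fun t s hs => (key t (hIntAll t)).2 s hs)
end

section
/- Consider the one-dimensional Smoluchowski diffusion dX(t) = -u_x(X(t))dt + σ dW(t) with σ > 0 and C² potential u : ℝ → ℝ₊, and set V = 1 + u/σ². Then the continuous-time nonlinear generator satisfies the exact identity H(V) := e^{-V} A e^V = -½σ^{-2} u_x² + ½ u_{xx}, where A = ½σ² d²/dx² - u_x d/dx is the differential generator. Consequently, if lim_{|x|→∞} u(x) = ∞, lim_{|x|→∞} u_x(x)²/|u_{xx}(x)| = ∞ and liminf_{|x|→∞} u_x(x)² > 0, then H(V) ≤ -δW + b·1_C with W = 1 + u_x², some δ > 0, b < ∞, and C a compact (sublevel) set. -/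
open Filter

/-- For the Smoluchowski diffusion `dX = -u_x(X) dt + σ dW` with `C²` potential `u ≥ 0`
and `V = 1 + u/σ²`, the nonlinear generator satisfies the exact identity
`H(V) = e^{-V} A e^V = -½σ⁻² u_x² + ½ u_{xx}`; and under the Donsker–Varadhan-type
growth conditions on `u` one gets the drift `H(V) ≤ -δ W + b 1_C` with `W = 1 + u_x²`
and `C` compact. -/
theorem stmt5 (σ : ℝ) (hσ : 0 < σ) (u : ℝ → ℝ)
    (hu : ContDiff ℝ 2 u) (hu0 : ∀ x, 0 ≤ u x)
    (hcoercive : Tendsto u (cocompact ℝ) atTop)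
    (hdom : ∀ M : ℝ, ∀ᶠ x in cocompact ℝ, M * |deriv (deriv u) x| ≤ (deriv u x) ^ 2)
    (hliminf : ∃ c : ℝ, 0 < c ∧ ∀ᶠ x in cocompact ℝ, c ≤ (deriv u x) ^ 2) :
    (∀ x : ℝ,
        Real.exp (-(1 + u x / σ ^ 2))
            * (σ ^ 2 / 2 * deriv (deriv fun y => Real.exp (1 + u y / σ ^ 2)) x
              - deriv u x * deriv (fun y => Real.exp (1 + u y / σ ^ 2)) x)
          = -(deriv u x) ^ 2 / (2 * σ ^ 2) + deriv (deriv u) x / 2)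
    ∧ ∃ δ : ℝ, 0 < δ ∧ ∃ b : ℝ, ∃ C : Set ℝ, IsCompact C ∧
        ∀ x : ℝ,
          Real.exp (-(1 + u x / σ ^ 2))
              * (σ ^ 2 / 2 * deriv (deriv fun y => Real.exp (1 + u y / σ ^ 2)) x
                - deriv u x * deriv (fun y => Real.exp (1 + u y / σ ^ 2)) x)
            ≤ -δ * (1 + (deriv u x) ^ 2) + b * C.indicator (1 : ℝ → ℝ) x := by
  have hσ2 : (σ : ℝ) ^ 2 ≠ 0 := by positivity
  have hudiff : Differentiable ℝ u := hu.differentiable (by norm_num)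
  have hu1 : ContDiff ℝ 1 (deriv u) := by
    have := (contDiff_succ_iff_deriv (n := 1)).mp (by exact_mod_cast hu)
    exact this.2.2
  have hu1diff : Differentiable ℝ (deriv u) := hu1.differentiable (by norm_num)
  have hu2cont : Continuous (deriv (deriv u)) := by
    have := (contDiff_succ_iff_deriv (n := 0)).mp (by exact_mod_cast hu1)
    exact this.2.2.continuous
  -- first derivative
  have hd1 : ∀ x : ℝ, HasDerivAt (fun y => Real.exp (1 + u y / σ ^ 2))
      (Real.exp (1 + u x / σ ^ 2) * (deriv u x / σ ^ 2)) x := by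
    intro x
    have h := (((hudiff x).hasDerivAt.div_const (σ ^ 2)).const_add 1).exp
    simpa using h
  have hd1' : deriv (fun y => Real.exp (1 + u y / σ ^ 2))
      = fun x => Real.exp (1 + u x / σ ^ 2) * (deriv u x / σ ^ 2) :=
    funext fun x => (hd1 x).deriv
  -- second derivative
  have hd2 : ∀ x : ℝ, deriv (deriv fun y => Real.exp (1 + u y / σ ^ 2)) x
      = Real.exp (1 + u x / σ ^ 2) * (deriv u x / σ ^ 2) * (deriv u x / σ ^ 2)
        + Real.exp (1 + u x / σ ^ 2) * (deriv (deriv u) x / σ ^ 2) := by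
    intro x
    rw [hd1']
    have h := (hd1 x).mul ((hu1diff x).hasDerivAt.div_const (σ ^ 2))
    exact h.deriv
  -- exact identity
  have hid : ∀ x : ℝ,
      Real.exp (-(1 + u x / σ ^ 2))
          * (σ ^ 2 / 2 * deriv (deriv fun y => Real.exp (1 + u y / σ ^ 2)) x
            - deriv u x * deriv (fun y => Real.exp (1 + u y / σ ^ 2)) x)
        = -(deriv u x) ^ 2 / (2 * σ ^ 2) + deriv (deriv u) x / 2 := by
    intro x
    rw [hd2 x, hd1', Real.exp_neg]
    field_simp
    ring
  refine ⟨hid, ?_⟩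
  obtain ⟨c, hc, hcev⟩ := hliminf
  -- eventually bound
  have hev : ∀ᶠ x in cocompact ℝ,
      -(deriv u x) ^ 2 / (2 * σ ^ 2) + deriv (deriv u) x / 2
        ≤ -(1 / (4 * σ ^ 2 * (1 + 1 / c))) * (1 + (deriv u x) ^ 2) := by
    filter_upwards [hdom (2 * σ ^ 2), hcev] with x hx hcx
    have hs : (0:ℝ) < σ ^ 2 := by positivity
    have habs : deriv (deriv u) x ≤ |deriv (deriv u) x| := le_abs_self _
    have ha : 2 * σ ^ 2 * deriv (deriv u) x ≤ (deriv u x) ^ 2 :=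
      le_trans (by nlinarith) hx
    have h1 : deriv (deriv u) x / 2 ≤ (deriv u x) ^ 2 / (4 * σ ^ 2) := by
      rw [div_le_div_iff₀ (by norm_num) (by positivity)]
      nlinarith
    have h2 : (1 / (4 * σ ^ 2 * (1 + 1 / c))) * (1 + (deriv u x) ^ 2)
        ≤ (deriv u x) ^ 2 / (4 * σ ^ 2) := by
      have hc1 : (0:ℝ) < 1 + 1 / c := by positivity
      have : 1 + (deriv u x) ^ 2 ≤ (1 + 1 / c) * (deriv u x) ^ 2 := by
        have h3 : (1:ℝ) ≤ (deriv u x) ^ 2 / c := (one_le_div hc).mpr hcx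
        have h4 : (deriv u x) ^ 2 / c = (1 / c) * (deriv u x) ^ 2 := by ring
        nlinarith
      calc 1 / (4 * σ ^ 2 * (1 + 1 / c)) * (1 + (deriv u x) ^ 2)
          ≤ 1 / (4 * σ ^ 2 * (1 + 1 / c)) * ((1 + 1 / c) * (deriv u x) ^ 2) := by
            apply mul_le_mul_of_nonneg_left this (by positivity)
        _ = (deriv u x) ^ 2 / (4 * σ ^ 2) := by field_simp
    have heq : -(deriv u x) ^ 2 / (2 * σ ^ 2) = -2 * ((deriv u x) ^ 2 / (4 * σ ^ 2)) := by ring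
    rw [heq]
    linarith
  set δ : ℝ := 1 / (4 * σ ^ 2 * (1 + 1 / c)) with hδ
  have hδpos : 0 < δ := by positivity
  obtain ⟨K, hK, hKsub⟩ := hasBasis_cocompact.eventually_iff.mp hev
  -- bound on K
  have hcont : Continuous fun x : ℝ =>
      -(deriv u x) ^ 2 / (2 * σ ^ 2) + deriv (deriv u) x / 2 + δ * (1 + (deriv u x) ^ 2) := by
    fun_prop
  obtain ⟨b, hb⟩ := hK.exists_bound_of_continuousOn hcont.continuousOn
  refine ⟨δ, hδpos, b, K, hK, fun x => ?_⟩
  rw [hid x]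
  by_cases hx : x ∈ K
  · have := hb x hx
    rw [Real.norm_eq_abs] at this
    have h1 := (abs_le.mp this).2
    have hind : K.indicator (1 : ℝ → ℝ) x = 1 := Set.indicator_of_mem hx 1
    rw [hind]
    linarith
  · have h1 := hKsub hx
    have hind : K.indicator (1 : ℝ → ℝ) x = 0 := Set.indicator_of_notMem hx 1
    rw [hind]
    linarith
end

section
/- Let P̂ be a positive kernel on (X,B) and suppose there exists a measure μ with ∫ v dμ < ∞ such that P̂(x,A) ≤ μ(A) for all x∈X, A∈B. Then P̂² is v-separable: for every ε > 0 there exists a finite-rank kernel K_ε = Σ_{i=1}^n s_i ⊗ ν_i with s_i ∈ L∞^v, ν_i finite measures with ∫v dν_i < ∞, such that the induced operator norm ⦀P̂² − K_ε⦀_v ≤ ε. -/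
open MeasureTheory ProbabilityTheory
open scoped ENNReal NNReal

namespace Stmt8Aux

variable {X : Type*} [MeasurableSpace X]

/-- A finite linear combination of indicators of measurable rectangles. -/
noncomputable def comb {n : ℕ} (c : Fin n → ℝ) (A B : Fin n → Set X) : X × X → ℝ :=
  fun p => ∑ i, c i * (A i ×ˢ B i).indicator 1 p

lemma comb_measurable {n : ℕ} (c : Fin n → ℝ) {A B : Fin n → Set X}
    (hA : ∀ i, MeasurableSet (A i)) (hB : ∀ i, MeasurableSet (B i)) :
    Measurable (comb c A B) := by
  apply Finset.measurable_sum
  intro i _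
  exact (measurable_one.indicator ((hA i).prod (hB i))).const_mul (c i)

/-- `F` can be approximated in `L¹(ρ)` by combinations of rectangle indicators. -/
def RectApprox (ρ : Measure (X × X)) (F : X × X → ℝ) : Prop :=
  ∀ ε : ℝ, 0 < ε → ∃ (n : ℕ) (c : Fin n → ℝ) (A B : Fin n → Set X),
    (∀ i, MeasurableSet (A i)) ∧ (∀ i, MeasurableSet (B i)) ∧
    ∫⁻ p, ‖F p - comb c A B p‖₊ ∂ρ ≤ ENNReal.ofReal ε

lemma RectApprox.zero (ρ : Measure (X × X)) : RectApprox ρ (fun _ => 0) := by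
  intro ε hε
  refine ⟨0, ![], ![], ![], by simp, by simp, ?_⟩
  simp [comb]

lemma RectApprox.congr {ρ : Measure (X × X)} {F G : X × X → ℝ} (h : ∀ p, F p = G p)
    (hF : RectApprox ρ F) : RectApprox ρ G := by
  intro ε hε
  obtain ⟨n, c, A, B, hA, hB, hc⟩ := hF ε hε
  exact ⟨n, c, A, B, hA, hB, by simpa [← h] using hc⟩

lemma RectApprox.add {ρ : Measure (X × X)} {F G : X × X → ℝ} (hGm : Measurable G)
    (hF : RectApprox ρ F) (hG : RectApprox ρ G) : RectApprox ρ (fun p => F p + G p) := by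
  intro ε hε
  obtain ⟨n, c, A, B, hA, hB, hc⟩ := hF (ε/2) (by linarith)
  obtain ⟨m, d, C, D, hC, hD, hd⟩ := hG (ε/2) (by linarith)
  refine ⟨n + m, Fin.append c d, Fin.append A C, Fin.append B D, ?_, ?_, ?_⟩
  · intro i
    refine Fin.addCases (fun j => ?_) (fun j => ?_) i
    · simpa [Fin.append_left] using hA j
    · simpa [Fin.append_right] using hC j
  · intro i
    refine Fin.addCases (fun j => ?_) (fun j => ?_) i
    · simpa [Fin.append_left] using hB j
    · simpa [Fin.append_right] using hD j
  · have hcomb : ∀ p, comb (Fin.append c d) (Fin.append A C) (Fin.append B D) p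
        = comb c A B p + comb d C D p := by
      intro p
      simp [comb, Fin.sum_univ_add, Fin.append_left, Fin.append_right]
    calc ∫⁻ p, ‖F p + G p - comb (Fin.append c d) (Fin.append A C) (Fin.append B D) p‖₊ ∂ρ
      _ ≤ ∫⁻ p, ((‖F p - comb c A B p‖₊ : ℝ≥0∞) + ‖G p - comb d C D p‖₊) ∂ρ := by
          apply lintegral_mono
          intro p
          dsimp only
          rw [hcomb p]
          have h1 : F p + G p - (comb c A B p + comb d C D p)
              = (F p - comb c A B p) + (G p - comb d C D p) := by ring
          rw [h1]
          exact_mod_cast ENNReal.coe_le_coe.2 (nnnorm_add_le _ _)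
      _ = (∫⁻ p, (‖F p - comb c A B p‖₊ : ℝ≥0∞) ∂ρ)
            + ∫⁻ p, (‖G p - comb d C D p‖₊ : ℝ≥0∞) ∂ρ :=
          lintegral_add_right _ ((hGm.sub (comb_measurable d hC hD)).enorm)
      _ ≤ ENNReal.ofReal (ε/2) + ENNReal.ofReal (ε/2) := add_le_add hc hd
      _ = ENNReal.ofReal ε := by
          rw [← ENNReal.ofReal_add (by linarith) (by linarith)]
          norm_num

lemma RectApprox.smul {ρ : Measure (X × X)} {F : X × X → ℝ}
    (hF : RectApprox ρ F) (a : ℝ) : RectApprox ρ (fun p => a * F p) := by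
  intro ε hε
  rcases eq_or_ne a 0 with rfl | ha
  · refine ⟨0, ![], ![], ![], by simp, by simp, ?_⟩
    simp [comb]
  · have hapos : 0 < |a| := abs_pos.2 ha
    obtain ⟨n, c, A, B, hA, hB, hc⟩ := hF (ε / |a|) (by positivity)
    refine ⟨n, fun i => a * c i, A, B, hA, hB, ?_⟩
    have hcomb : ∀ p, comb (fun i => a * c i) A B p = a * comb c A B p := by
      intro p
      simp [comb, Finset.mul_sum, mul_assoc]
    calc ∫⁻ p, ‖a * F p - comb (fun i => a * c i) A B p‖₊ ∂ρ
      _ = ∫⁻ p, (‖a‖₊ : ℝ≥0∞) * ‖F p - comb c A B p‖₊ ∂ρ := by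
          apply lintegral_congr
          intro p
          rw [hcomb p, ← mul_sub, nnnorm_mul]
          push_cast
          ring
      _ = (‖a‖₊ : ℝ≥0∞) * ∫⁻ p, (‖F p - comb c A B p‖₊ : ℝ≥0∞) ∂ρ :=
          lintegral_const_mul' _ _ ENNReal.coe_ne_top
      _ ≤ (‖a‖₊ : ℝ≥0∞) * ENNReal.ofReal (ε / |a|) := by gcongr
      _ = ENNReal.ofReal ε := by
          rw [← enorm_eq_nnnorm, Real.enorm_eq_ofReal_abs, ← ENNReal.ofReal_mul (abs_nonneg a)]
          rw [mul_div_cancel₀ _ (ne_of_gt hapos)]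

lemma RectApprox.close {ρ : Measure (X × X)} {F : X × X → ℝ}
    (h : ∀ ε : ℝ, 0 < ε → ∃ G : X × X → ℝ, Measurable G ∧ RectApprox ρ G ∧
      ∫⁻ p, ‖F p - G p‖₊ ∂ρ ≤ ENNReal.ofReal ε) : RectApprox ρ F := by
  intro ε hε
  obtain ⟨G, hGm, hG, hFG⟩ := h (ε/2) (by linarith)
  obtain ⟨n, c, A, B, hA, hB, hc⟩ := hG (ε/2) (by linarith)
  refine ⟨n, c, A, B, hA, hB, ?_⟩
  calc ∫⁻ p, ‖F p - comb c A B p‖₊ ∂ρ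
    _ ≤ ∫⁻ p, ((‖F p - G p‖₊ : ℝ≥0∞) + ‖G p - comb c A B p‖₊) ∂ρ := by
        apply lintegral_mono
        intro p
        dsimp only
        have h1 : F p - comb c A B p = (F p - G p) + (G p - comb c A B p) := by ring
        rw [h1]
        exact_mod_cast ENNReal.coe_le_coe.2 (nnnorm_add_le _ _)
    _ = (∫⁻ p, (‖F p - G p‖₊ : ℝ≥0∞) ∂ρ) + ∫⁻ p, (‖G p - comb c A B p‖₊ : ℝ≥0∞) ∂ρ :=
        lintegral_add_right _ ((hGm.sub (comb_measurable c hA hB)).enorm)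
    _ ≤ ENNReal.ofReal (ε/2) + ENNReal.ofReal (ε/2) := add_le_add hFG hc
    _ = ENNReal.ofReal ε := by
        rw [← ENNReal.ofReal_add (by linarith) (by linarith)]
        norm_num


lemma rectApprox_indicator (ρ : Measure (X × X)) [IsFiniteMeasure ρ]
    {S : Set (X × X)} (hS : MeasurableSet S) :
    RectApprox ρ (S.indicator 1) := by
  refine MeasurableSpace.induction_on_inter (C := fun S _ => RectApprox ρ (S.indicator 1))
    generateFrom_prod.symm isPiSystem_prod ?_ ?_ ?_ ?_ _ hS
  · -- empty
    exact RectApprox.congr (fun p => by simp) (RectApprox.zero ρ)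
  · -- rectangles
    rintro t ⟨A, hA, B, hB, rfl⟩
    intro ε hε
    refine ⟨1, fun _ => 1, fun _ => A, fun _ => B, fun _ => hA, fun _ => hB, ?_⟩
    have : ∀ p : X × X, (A ×ˢ B).indicator (1 : X × X → ℝ) p
        - comb (n := 1) (fun _ => (1:ℝ)) (fun _ => A) (fun _ => B) p = 0 := by
      intro p
      simp [comb]
    simp only [this]
    simp
  · -- complement
    intro t ht hApx
    intro ε hε
    obtain ⟨n, c, A, B, hA, hB, hc⟩ := hApx ε hε
    refine ⟨n + 1, Fin.cons 1 (fun i => -c i), Fin.cons Set.univ A, Fin.cons Set.univ B,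
      ?_, ?_, ?_⟩
    · intro i
      refine Fin.cases ?_ (fun j => ?_) i
      · simp
      · simpa using hA j
    · intro i
      refine Fin.cases ?_ (fun j => ?_) i
      · simp
      · simpa using hB j
    · have hkey : ∀ p : X × X, (‖tᶜ.indicator (1 : X × X → ℝ) p
          - comb (Fin.cons 1 (fun i => -c i)) (Fin.cons Set.univ A) (Fin.cons Set.univ B) p‖₊
            : ℝ≥0∞)
          = ‖t.indicator (1 : X × X → ℝ) p - comb c A B p‖₊ := by
        intro p
        have h1 : comb (Fin.cons 1 (fun i => -c i)) (Fin.cons Set.univ A) (Fin.cons Set.univ B) p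
            = 1 - comb c A B p := by
          simp only [comb, Fin.sum_univ_succ, Fin.cons_zero, Fin.cons_succ, Set.univ_prod_univ,
            Set.indicator_univ, Pi.one_apply, one_mul, neg_mul]
          rw [Finset.sum_neg_distrib]
          ring
        have h2 : tᶜ.indicator (1 : X × X → ℝ) p = 1 - t.indicator 1 p := by
          by_cases hp : p ∈ t <;> simp [hp]
        rw [h1, h2]
        have h3 : 1 - t.indicator (1 : X × X → ℝ) p - (1 - comb c A B p)
            = -(t.indicator 1 p - comb c A B p) := by ring
        rw [h3, nnnorm_neg]
      calc ∫⁻ p, ‖tᶜ.indicator (1 : X × X → ℝ) p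
            - comb (Fin.cons 1 (fun i => -c i)) (Fin.cons Set.univ A) (Fin.cons Set.univ B) p‖₊ ∂ρ
          = ∫⁻ p, ‖t.indicator (1 : X × X → ℝ) p - comb c A B p‖₊ ∂ρ :=
            lintegral_congr hkey
        _ ≤ ENNReal.ofReal ε := hc
  · -- disjoint unions
    intro f hdisj hfm hApx
    -- indicators of finite unions are approximable
    have hfin : ∀ N : ℕ, RectApprox ρ ((⋃ i ∈ Finset.range N, f i).indicator 1) := by
      intro N
      induction N with
      | zero => exact RectApprox.congr (fun p => by simp) (RectApprox.zero ρ)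
      | succ N ih =>
        have hUN : (⋃ i ∈ Finset.range (N+1), f i)
            = (⋃ i ∈ Finset.range N, f i) ∪ f N := by
          rw [Finset.range_add_one]
          simp [Set.biUnion_insert, Set.union_comm]
        have hdisjN : Disjoint (⋃ i ∈ Finset.range N, f i) (f N) := by
          rw [Set.disjoint_iUnion₂_left]
          intro i hi
          exact hdisj (by simpa using (Finset.mem_range.1 hi).ne)
        have heq : ∀ p, (⋃ i ∈ Finset.range (N+1), f i).indicator (1 : X × X → ℝ) p
            = (⋃ i ∈ Finset.range N, f i).indicator 1 p + (f N).indicator 1 p := by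
          intro p
          rw [hUN, Set.indicator_union_of_disjoint hdisjN]
        refine RectApprox.congr (fun p => (heq p).symm) ?_
        exact RectApprox.add (measurable_one.indicator (hfm N)) ih (hApx N)
    apply RectApprox.close
    intro ε hε
    -- choose a large N with small tail
    have htsum : ∑' i, ρ (f i) ≠ ∞ := by
      rw [← measure_iUnion hdisj hfm]
      exact (measure_lt_top ρ _).ne
    have htail : Filter.Tendsto (fun N => ∑' i, ρ (f (i + N))) Filter.atTop (nhds 0) :=
      ENNReal.tendsto_sum_nat_add _ htsum
    have hev : ∀ᶠ N in Filter.atTop, ∑' i, ρ (f (i + N)) < ENNReal.ofReal ε :=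
      htail.eventually_lt_const (by simp [hε])
    obtain ⟨N, hN⟩ := hev.exists
    refine ⟨(⋃ i ∈ Finset.range N, f i).indicator 1,
      measurable_one.indicator ((Finset.range N).measurableSet_biUnion (fun i _ => hfm i)),
      hfin N, ?_⟩
    have hsub : (⋃ i, f i) \ (⋃ i ∈ Finset.range N, f i) ⊆ ⋃ i, f (i + N) := by
      rintro p ⟨⟨_, ⟨j, rfl⟩, hj⟩, hnot⟩
      by_cases hjN : j < N
      · exact absurd (Set.mem_biUnion (Finset.mem_range.2 hjN) hj) hnot
      · exact Set.mem_iUnion.2 ⟨j - N, by rwa [Nat.sub_add_cancel (not_lt.1 hjN)]⟩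
    have hpt : ∀ p : X × X, (‖(⋃ i, f i).indicator (1 : X × X → ℝ) p
        - (⋃ i ∈ Finset.range N, f i).indicator 1 p‖₊ : ℝ≥0∞)
        = ((⋃ i, f i) \ (⋃ i ∈ Finset.range N, f i)).indicator (fun _ => (1:ℝ≥0∞)) p := by
      intro p
      have hsubset : (⋃ i ∈ Finset.range N, f i) ⊆ ⋃ i, f i :=
        Set.iUnion₂_subset (fun i _ => Set.subset_iUnion f i)
      by_cases hpT : p ∈ ⋃ i, f i
      · by_cases hpU : p ∈ ⋃ i ∈ Finset.range N, f i
        · rw [Set.indicator_of_mem hpT, Set.indicator_of_mem hpU,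
            Set.indicator_of_notMem (fun h => h.2 hpU)]
          simp
        · rw [Set.indicator_of_mem hpT, Set.indicator_of_notMem hpU,
            Set.indicator_of_mem (Set.mem_diff_of_mem hpT hpU)]
          simp
      · have hpU : p ∉ ⋃ i ∈ Finset.range N, f i := fun h => hpT (hsubset h)
        rw [Set.indicator_of_notMem hpT, Set.indicator_of_notMem hpU,
          Set.indicator_of_notMem (fun h => hpT h.1)]
        simp
    calc ∫⁻ p, ‖(⋃ i, f i).indicator (1 : X × X → ℝ) p
          - (⋃ i ∈ Finset.range N, f i).indicator 1 p‖₊ ∂ρ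
        = ∫⁻ p, ((⋃ i, f i) \ (⋃ i ∈ Finset.range N, f i)).indicator (fun _ => (1:ℝ≥0∞)) p ∂ρ :=
          lintegral_congr hpt
      _ = ρ ((⋃ i, f i) \ (⋃ i ∈ Finset.range N, f i)) := by
          rw [lintegral_indicator
            ((MeasurableSet.iUnion hfm).diff
              ((Finset.range N).measurableSet_biUnion (fun i _ => hfm i)))]
          simp
      _ ≤ ρ (⋃ i, f (i + N)) := measure_mono hsub
      _ ≤ ∑' i, ρ (f (i + N)) := measure_iUnion_le _
      _ ≤ ENNReal.ofReal ε := hN.le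


lemma rectApprox_simple (ρ : Measure (X × X)) [IsFiniteMeasure ρ]
    (φ : SimpleFunc (X × X) ℝ≥0∞) :
    RectApprox ρ (fun p => (φ p).toReal) := by
  induction φ using SimpleFunc.induction with
  | @const c s hs =>
    have heq : ∀ p, ((SimpleFunc.piecewise s hs (SimpleFunc.const _ c)
        (SimpleFunc.const _ 0)) p).toReal = c.toReal * s.indicator 1 p := by
      intro p
      rw [SimpleFunc.piecewise_apply]
      by_cases hp : p ∈ s <;> simp [hp]
    exact RectApprox.congr (fun p => (heq p).symm)
      ((rectApprox_indicator ρ hs).smul c.toReal)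
  | @add f g hdisj hf hg =>
    have hp0 : ∀ p, f p = 0 ∨ g p = 0 := by
      intro p
      by_contra h'
      push_neg at h'
      exact Set.disjoint_left.mp hdisj (Function.mem_support.2 h'.1)
        (Function.mem_support.2 h'.2)
    have heq : ∀ p, ((f + g) p).toReal = (f p).toReal + (g p).toReal := by
      intro p
      rw [SimpleFunc.add_apply]
      rcases hp0 p with h | h <;> simp [h]
    exact RectApprox.congr (fun p => (heq p).symm)
      (RectApprox.add (g.measurable.ennreal_toReal) hf hg)

lemma rectApprox_toReal (ρ : Measure (X × X)) [IsFiniteMeasure ρ] {f : X × X → ℝ≥0∞}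
    (hfm : Measurable f) (hfle : ∀ p, f p ≤ 1) :
    RectApprox ρ (fun p => (f p).toReal) := by
  have hfnetop : ∀ p, f p ≠ ∞ := fun p => ((hfle p).trans_lt ENNReal.one_lt_top).ne
  have hfint : ∫⁻ p, f p ∂ρ ≠ ∞ := by
    refine ((lintegral_mono hfle).trans_lt ?_).ne
    simp [lintegral_one]
  apply RectApprox.close
  intro ε hε
  by_cases hle : ∫⁻ p, f p ∂ρ ≤ ENNReal.ofReal ε
  · refine ⟨fun _ => 0, measurable_const, RectApprox.zero ρ, ?_⟩
    calc ∫⁻ p, ‖(f p).toReal - 0‖₊ ∂ρ = ∫⁻ p, f p ∂ρ := by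
          apply lintegral_congr
          intro p
          rw [sub_zero, ← enorm_eq_nnnorm, Real.enorm_eq_ofReal ENNReal.toReal_nonneg,
            ENNReal.ofReal_toReal (hfnetop p)]
      _ ≤ ENNReal.ofReal ε := hle
  · push_neg at hle
    have hsup := lintegral_eq_iSup_eapprox_lintegral (μ := ρ) hfm
    have hlt : ∫⁻ p, f p ∂ρ - ENNReal.ofReal ε < ⨆ n, (SimpleFunc.eapprox f n).lintegral ρ := by
      rw [← hsup]
      exact ENNReal.sub_lt_self hfint ((ENNReal.ofReal_pos.2 hε).trans hle).ne'
        (by simp [hε])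
    obtain ⟨N, hN⟩ := lt_iSup_iff.mp hlt
    rw [← SimpleFunc.lintegral_eq_lintegral] at hN
    have heapx_le : ∀ p, SimpleFunc.eapprox f N p ≤ f p := by
      intro p
      rw [← SimpleFunc.iSup_eapprox_apply hfm]
      exact le_iSup (fun n => SimpleFunc.eapprox f n p) N
    refine ⟨fun p => (SimpleFunc.eapprox f N p).toReal,
      (SimpleFunc.eapprox f N).measurable.ennreal_toReal,
      rectApprox_simple ρ _, ?_⟩
    have hpt : ∀ p, (‖(f p).toReal - (SimpleFunc.eapprox f N p).toReal‖₊ : ℝ≥0∞)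
        = f p - SimpleFunc.eapprox f N p := by
      intro p
      rw [← enorm_eq_nnnorm, Real.enorm_eq_ofReal (sub_nonneg.2 (ENNReal.toReal_mono (hfnetop p) (heapx_le p))),
        ← ENNReal.toReal_sub_of_le (heapx_le p) (hfnetop p),
        ENNReal.ofReal_toReal (((tsub_le_self).trans_lt (lt_of_le_of_ne le_top (hfnetop p))).ne)]
    calc ∫⁻ p, ‖(f p).toReal - (SimpleFunc.eapprox f N p).toReal‖₊ ∂ρ
        = ∫⁻ p, (f p - SimpleFunc.eapprox f N p) ∂ρ := lintegral_congr hpt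
      _ = ∫⁻ p, f p ∂ρ - ∫⁻ p, SimpleFunc.eapprox f N p ∂ρ := by
          exact lintegral_sub (SimpleFunc.eapprox f N).measurable
            ((lintegral_mono heapx_le).trans_lt
              (lt_of_le_of_ne le_top (Ne.symm (Ne.symm hfint)))).ne
            (Filter.Eventually.of_forall heapx_le)
      _ ≤ ENNReal.ofReal ε := by
          rw [tsub_le_iff_right]
          have := hN.le
          rw [tsub_le_iff_right] at this
          exact this.trans (by rw [add_comm])

end Stmt8Aux

open Stmt8Aux in
/-- If a positive kernel `P̂` is dominated by a fixed measure `μ` with `∫ v dμ < ∞`,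
then `P̂²` is `v`-separable: it can be approximated in the induced `v`-operator norm
by finite-rank kernels `Σᵢ sᵢ ⊗ νᵢ`. -/
theorem stmt8 {X : Type*} [MeasurableSpace X]
    (v : X → ℝ) (hv : ∀ x, 1 ≤ v x) (hvmeas : Measurable v)
    (Phat : X → Measure X)
    (hPmeas : ∀ A : Set X, MeasurableSet A → Measurable fun x => Phat x A)
    (μ : Measure X)
    (hdom : ∀ x (A : Set X), MeasurableSet A → Phat x A ≤ μ A)
    (hμv : ∫⁻ x, ENNReal.ofReal (v x) ∂μ < ⊤) :
    ∀ ε : ℝ, 0 < ε →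
      ∃ (n : ℕ) (s : Fin n → X → ℝ) (ν : Fin n → Measure X),
        (∀ i, Measurable (s i)) ∧
        (∀ i, ∃ c : ℝ, ∀ x, |s i x| ≤ c * v x) ∧
        (∀ i, ∫⁻ x, ENNReal.ofReal (v x) ∂(ν i) < ⊤) ∧
        ∀ g : X → ℝ, Measurable g → (∀ x, |g x| ≤ v x) →
          ∀ x, |(∫ y, (∫ z, g z ∂(Phat y)) ∂(Phat x))
                  - ∑ i, s i x * ∫ y, g y ∂(ν i)| ≤ ε * v x := by
  intro ε hε
  -- basic instances and facts
  have hμuniv : μ Set.univ ≤ ∫⁻ x, ENNReal.ofReal (v x) ∂μ := by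
    rw [← lintegral_one]
    exact lintegral_mono fun x => ENNReal.one_le_ofReal.2 (hv x)
  haveI hμfin : IsFiniteMeasure μ := ⟨hμuniv.trans_lt hμv⟩
  set κ : Kernel X X := ⟨Phat, Measure.measurable_of_measurable_coe _ hPmeas⟩ with hκdef
  have hκapp : ∀ x, κ x = Phat x := fun x => rfl
  haveI : IsFiniteKernel κ := ⟨⟨μ Set.univ, measure_lt_top μ _, fun x => by
    rw [hκapp]; exact hdom x Set.univ MeasurableSet.univ⟩⟩
  have hκle : ∀ x, Phat x ≤ μ := fun x => Measure.le_iff.2 fun s hs => hdom x s hs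
  have hPfin : ∀ x, IsFiniteMeasure (Phat x) := fun x =>
    ⟨(hdom x Set.univ MeasurableSet.univ).trans_lt (measure_lt_top μ _)⟩
  set ρ0 : Measure (X × X) := μ.prod μ with hρ0
  have hΓle : μ ⊗ₘ κ ≤ ρ0 := by
    refine Measure.le_iff.2 fun s hs => ?_
    rw [Measure.compProd_apply hs, hρ0, Measure.prod_apply hs]
    exact lintegral_mono fun x => hdom x _ (measurable_prodMk_left hs)
  set r : X × X → ℝ≥0∞ := fun p => min ((μ ⊗ₘ κ).rnDeriv ρ0 p) 1 with hrdef
  have hrm : Measurable r := ((μ ⊗ₘ κ).measurable_rnDeriv ρ0).min measurable_const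
  have hrle1 : ∀ p, r p ≤ 1 := fun p => min_le_right _ _
  have hrtop : ∀ p, r p ≠ ⊤ := fun p => ((hrle1 p).trans_lt ENNReal.one_lt_top).ne
  have hΓd : μ ⊗ₘ κ = ρ0.withDensity r := by
    have h1 : (μ ⊗ₘ κ).rnDeriv ρ0 =ᵐ[ρ0] r := by
      filter_upwards [Measure.rnDeriv_le_one_of_le hΓle] with p hp
      exact (min_eq_left hp).symm
    rw [← withDensity_congr_ae h1,
      Measure.withDensity_rnDeriv_eq _ _ (Measure.absolutelyContinuous_of_le hΓle)]
  -- key change-of-measure identity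
  have hkey : ∀ F : X × X → ℝ≥0∞, Measurable F →
      ∫⁻ x, ∫⁻ y, F (x, y) ∂Phat x ∂μ = ∫⁻ x, ∫⁻ y, r (x, y) * F (x, y) ∂μ ∂μ := by
    intro F hF
    have h1 : ∫⁻ x, ∫⁻ y, F (x, y) ∂κ x ∂μ = ∫⁻ p, F p ∂(μ ⊗ₘ κ) :=
      (Measure.lintegral_compProd hF).symm
    calc ∫⁻ x, ∫⁻ y, F (x, y) ∂Phat x ∂μ
        = ∫⁻ p, F p ∂(μ ⊗ₘ κ) := h1
      _ = ∫⁻ p, r p * F p ∂ρ0 := by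
          rw [hΓd, lintegral_withDensity_eq_lintegral_mul ρ0 hrm hF]
          rfl
      _ = ∫⁻ x, ∫⁻ y, r (x, y) * F (x, y) ∂μ ∂μ :=
          lintegral_prod _ ((hrm.mul hF).aemeasurable)
  -- the weighted measure
  set W : X × X → ℝ≥0∞ := fun p => ENNReal.ofReal (v p.2) with hWdef
  have hWm : Measurable W := (hvmeas.comp measurable_snd).ennreal_ofReal
  set ρv : Measure (X × X) := ρ0.withDensity W with hρv
  haveI : IsFiniteMeasure ρv := by
    constructor
    rw [hρv, withDensity_apply _ MeasurableSet.univ, Measure.restrict_univ, hρ0,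
      lintegral_prod _ hWm.aemeasurable]
    calc ∫⁻ _x, ∫⁻ y, ENNReal.ofReal (v y) ∂μ ∂μ
        = (∫⁻ y, ENNReal.ofReal (v y) ∂μ) * μ Set.univ := lintegral_const _
      _ < ⊤ := ENNReal.mul_lt_top hμv (measure_lt_top μ _)
  -- approximate the density by rectangle combinations
  obtain ⟨n, c, A, B, hA, hB, happrox⟩ := rectApprox_toReal ρv hrm hrle1 ε hε
  set k : X × X → ℝ := comb c A B with hkdef
  have hkm : Measurable k := comb_measurable c hA hB
  have hErr : ∫⁻ p, ENNReal.ofReal (v p.2) * ‖(r p).toReal - k p‖₊ ∂ρ0 ≤ ENNReal.ofReal ε := by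
    have h0 := lintegral_withDensity_eq_lintegral_mul ρ0 hWm
      ((hrm.ennreal_toReal.sub hkm).enorm)
    calc ∫⁻ p, ENNReal.ofReal (v p.2) * ‖(r p).toReal - k p‖₊ ∂ρ0
        = ∫⁻ p, (W * fun a => ((‖(r a).toReal - k a‖₊ : ℝ≥0∞))) p ∂ρ0 :=
          lintegral_congr (fun p => rfl)
      _ = ∫⁻ p, ‖(r p).toReal - k p‖₊ ∂ρv := h0.symm
      _ ≤ ENNReal.ofReal ε := happrox
  -- the finite-rank kernel
  refine ⟨n, fun i x => c i * (Phat x (A i)).toReal, fun i => μ.restrict (B i), ?_, ?_, ?_, ?_⟩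
  · intro i
    exact ((hPmeas (A i) (hA i)).ennreal_toReal).const_mul _
  · intro i
    refine ⟨|c i| * (μ Set.univ).toReal, fun x => ?_⟩
    rw [abs_mul]
    have h1 : (Phat x (A i)).toReal ≤ (μ Set.univ).toReal :=
      ENNReal.toReal_mono (measure_ne_top μ _)
        ((hdom x (A i) (hA i)).trans (measure_mono (Set.subset_univ _)))
    calc |c i| * |(Phat x (A i)).toReal|
        ≤ |c i| * (μ Set.univ).toReal := by
          rw [abs_of_nonneg ENNReal.toReal_nonneg]
          exact mul_le_mul_of_nonneg_left h1 (abs_nonneg _)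
      _ ≤ |c i| * (μ Set.univ).toReal * v x :=
          le_mul_of_one_le_right (by positivity) (hv x)
  · intro i
    exact (lintegral_mono' Measure.restrict_le_self le_rfl).trans_lt hμv
  · intro g hg hgv x
    haveI := hPfin x
    -- integrability helpers
    have hgb : ∀ z, (‖g z‖₊ : ℝ≥0∞) ≤ ENNReal.ofReal (v z) := fun z => by
      rw [← enorm_eq_nnnorm, Real.enorm_eq_ofReal_abs]
      exact ENNReal.ofReal_le_ofReal (hgv z)
    have hintCv : ∀ (C : ℝ) (h : X → ℝ), Measurable h → (∀ z, |h z| ≤ C * v z) →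
        Integrable h μ := by
      intro C h hm hb
      refine ⟨hm.aestronglyMeasurable, ?_⟩
      have hbb : ∀ z, (‖h z‖₊ : ℝ≥0∞) ≤ ENNReal.ofReal |C| * ENNReal.ofReal (v z) := by
        intro z
        rw [← enorm_eq_nnnorm, Real.enorm_eq_ofReal_abs, ← ENNReal.ofReal_mul (abs_nonneg C)]
        refine ENNReal.ofReal_le_ofReal ((hb z).trans ?_)
        have : 0 ≤ v z := le_trans zero_le_one (hv z)
        exact mul_le_mul_of_nonneg_right (le_abs_self C) this
      calc ∫⁻ z, ‖h z‖₊ ∂μ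
          ≤ ∫⁻ z, ENNReal.ofReal |C| * ENNReal.ofReal (v z) ∂μ := lintegral_mono hbb
        _ = ENNReal.ofReal |C| * ∫⁻ z, ENNReal.ofReal (v z) ∂μ :=
            lintegral_const_mul _ hvmeas.ennreal_ofReal
        _ < ⊤ := ENNReal.mul_lt_top ENNReal.ofReal_lt_top hμv
    have hgintP : ∀ y, Integrable g (Phat y) := by
      intro y
      refine ⟨hg.aestronglyMeasurable, ?_⟩
      calc ∫⁻ z, ‖g z‖₊ ∂Phat y ≤ ∫⁻ z, ‖g z‖₊ ∂μ := lintegral_mono' (hκle y) le_rfl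
        _ ≤ ∫⁻ z, ENNReal.ofReal (v z) ∂μ := lintegral_mono hgb
        _ < ⊤ := hμv
    -- pointwise bound for the inner integral
    have hPgb : ∀ y, |∫ z, g z ∂Phat y| ≤ (∫⁻ z, ENNReal.ofReal (v z) ∂μ).toReal := by
      intro y
      rw [← Real.norm_eq_abs]
      calc ‖∫ z, g z ∂Phat y‖ ≤ (∫⁻ z, (‖g z‖₊ : ℝ≥0∞) ∂Phat y).toReal := by
            have h := enorm_integral_le_lintegral_enorm (μ := Phat y) g
            have hfin : ∫⁻ z, (‖g z‖₊ : ℝ≥0∞) ∂Phat y ≠ ⊤ := (hgintP y).2.ne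
            calc ‖∫ z, g z ∂Phat y‖
                = ((‖∫ z, g z ∂Phat y‖₊ : ℝ≥0∞)).toReal := by simp
              _ ≤ (∫⁻ z, (‖g z‖₊ : ℝ≥0∞) ∂Phat y).toReal := ENNReal.toReal_mono hfin h
        _ ≤ (∫⁻ z, ENNReal.ofReal (v z) ∂μ).toReal := by
            apply ENNReal.toReal_mono hμv.ne
            calc ∫⁻ z, (‖g z‖₊ : ℝ≥0∞) ∂Phat y ≤ ∫⁻ z, (‖g z‖₊ : ℝ≥0∞) ∂μ :=
                  lintegral_mono' (hκle y) le_rfl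
              _ ≤ ∫⁻ z, ENNReal.ofReal (v z) ∂μ := lintegral_mono hgb
    -- a.e. representation of the inner integral via the density r
    have hsec : ∀ (G : X → ℝ≥0∞), Measurable G → ∀ E : Set X, MeasurableSet E →
        ∫⁻ y in E, ∫⁻ z, G z ∂Phat y ∂μ = ∫⁻ y in E, ∫⁻ z, r (y, z) * G z ∂μ ∂μ := by
      intro G hG E hE
      have hind : ∀ (H : X → ℝ≥0∞) (y : X), E.indicator (fun _ => (1:ℝ≥0∞)) y * H y
          = E.indicator H y := by
        intro H y
        by_cases hy : y ∈ E <;> simp [hy]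
      have hF : Measurable fun p : X × X => E.indicator (fun _ => (1:ℝ≥0∞)) p.1 * G p.2 :=
        ((measurable_one.indicator hE).comp measurable_fst).mul (hG.comp measurable_snd)
      have h1 := hkey _ hF
      calc ∫⁻ y in E, ∫⁻ z, G z ∂Phat y ∂μ
          = ∫⁻ y, E.indicator (fun y => ∫⁻ z, G z ∂Phat y) y ∂μ :=
            (lintegral_indicator hE _).symm
        _ = ∫⁻ y, ∫⁻ z, E.indicator (fun _ => (1:ℝ≥0∞)) y * G z ∂Phat y ∂μ := by
            apply lintegral_congr
            intro y
            rw [← hind (fun y => ∫⁻ z, G z ∂Phat y) y, lintegral_const_mul _ hG]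
        _ = ∫⁻ y, ∫⁻ z, r (y, z) * (E.indicator (fun _ => (1:ℝ≥0∞)) y * G z) ∂μ ∂μ := h1
        _ = ∫⁻ y, E.indicator (fun y => ∫⁻ z, r (y, z) * G z ∂μ) y ∂μ := by
            apply lintegral_congr
            intro y
            have h4 : ∫⁻ z, r (y, z) * (E.indicator (fun _ => (1:ℝ≥0∞)) y * G z) ∂μ
                = E.indicator (fun _ => (1:ℝ≥0∞)) y * ∫⁻ z, r (y, z) * G z ∂μ := by
              rw [← lintegral_const_mul (E.indicator (fun _ => (1:ℝ≥0∞)) y)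
                (f := fun z => r (y, z) * G z) ((hrm.comp measurable_prodMk_left).mul hG)]
              apply lintegral_congr
              intro z
              ring
            rw [h4, hind (fun y => ∫⁻ z, r (y, z) * G z ∂μ) y]
        _ = ∫⁻ y in E, ∫⁻ z, r (y, z) * G z ∂μ ∂μ := lintegral_indicator hE _
    have haeqG : ∀ (G : X → ℝ≥0∞), Measurable G →
        ∀ᵐ y ∂μ, ∫⁻ z, G z ∂Phat y = ∫⁻ z, r (y, z) * G z ∂μ := by
      intro G hG
      refine ae_eq_of_forall_setLIntegral_eq_of_sigmaFinite ?_ ?_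
        (fun E hE _ => hsec G hG E hE)
      · exact Measurable.lintegral_kernel_prod_right (κ := κ) (f := fun _ z => G z)
          (hG.comp measurable_snd)
      · exact Measurable.lintegral_prod_right (hrm.mul (hG.comp measurable_snd))
    have hRint : ∀ y, Integrable (fun z => g z * (r (y, z)).toReal) μ := by
      intro y
      refine hintCv 1 _ (hg.mul ((hrm.comp measurable_prodMk_left).ennreal_toReal)) ?_
      intro z
      rw [abs_mul, one_mul]
      have h2 : |(r (y, z)).toReal| ≤ 1 := by
        rw [abs_of_nonneg ENNReal.toReal_nonneg]
        have := ENNReal.toReal_mono ENNReal.one_ne_top (hrle1 (y, z))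
        simpa using this
      calc |g z| * |(r (y, z)).toReal| ≤ v z * 1 :=
            mul_le_mul (hgv z) h2 (abs_nonneg _) (le_trans zero_le_one (hv z))
        _ = v z := mul_one _
    have hmix : ∀ (a : ℝ) (b : ℝ≥0∞), b ≠ ⊤ →
        ENNReal.ofReal (a * b.toReal) = b * ENNReal.ofReal a := by
      intro a b hb
      rw [mul_comm a, ENNReal.ofReal_mul ENNReal.toReal_nonneg, ENNReal.ofReal_toReal hb]
    have haeq : ∀ᵐ y ∂μ, (∫ z, g z ∂Phat y) = ∫ z, g z * (r (y, z)).toReal ∂μ := by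
      filter_upwards [haeqG (fun z => ENNReal.ofReal (g z)) hg.ennreal_ofReal,
        haeqG (fun z => ENNReal.ofReal (-g z)) hg.neg.ennreal_ofReal] with y h1 h2
      rw [integral_eq_lintegral_pos_part_sub_lintegral_neg_part (hgintP y),
        integral_eq_lintegral_pos_part_sub_lintegral_neg_part (hRint y), h1, h2]
      congr 2
      · apply lintegral_congr
        intro z
        exact (hmix (g z) (r (y, z)) (hrtop _)).symm
      · apply lintegral_congr
        intro z
        rw [← neg_mul]
        exact (hmix (-g z) (r (y, z)) (hrtop _)).symm
    -- the rectangle-kernel applied to g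
    have hrect : ∀ (i : Fin n) (y z : X), (A i ×ˢ B i).indicator (1 : X × X → ℝ) (y, z)
        = (A i).indicator 1 y * (B i).indicator 1 z := by
      intro i y z
      by_cases hy : y ∈ A i <;> by_cases hz : z ∈ B i <;>
        simp [Set.indicator_apply, Set.mem_prod, hy, hz]
    have hterm_int : ∀ (i : Fin n) (y : X),
        Integrable (fun z => g z * (c i * (A i ×ˢ B i).indicator 1 (y, z))) μ := by
      intro i y
      apply hintCv |c i|
      · exact hg.mul (((measurable_one.indicator ((hA i).prod (hB i))).comp
          measurable_prodMk_left).const_mul _)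
      · intro z
        rw [hrect i y z, abs_mul]
        have hle1 : |c i * ((A i).indicator (1 : X → ℝ) y * (B i).indicator 1 z)| ≤ |c i| := by
          rw [abs_mul]
          by_cases hy : y ∈ A i <;> by_cases hz : z ∈ B i <;>
            simp [hy, hz, abs_nonneg]
        calc |g z| * |c i * ((A i).indicator 1 y * (B i).indicator 1 z)|
            ≤ v z * |c i| :=
              mul_le_mul (hgv z) hle1 (abs_nonneg _) (le_trans zero_le_one (hv z))
          _ = |c i| * v z := mul_comm _ _
    have hsum_rep : ∀ y, (fun z => g z * k (y, z))
        = fun z => ∑ i, g z * (c i * (A i ×ˢ B i).indicator 1 (y, z)) := by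
      intro y
      funext z
      rw [hkdef]
      show g z * comb c A B (y, z) = _
      rw [comb, Finset.mul_sum]
    have hkint : ∀ y, Integrable (fun z => g z * k (y, z)) μ := by
      intro y
      rw [hsum_rep y]
      exact integrable_finset_sum _ (fun i _ => hterm_int i y)
    set Kg : X → ℝ := fun y => ∑ i, (A i).indicator (fun _ => c i * ∫ z in B i, g z ∂μ) y
      with hKgdef
    have hKg_int_eq : ∀ y, Kg y = ∫ z, g z * k (y, z) ∂μ := by
      intro y
      rw [hsum_rep y, integral_finset_sum _ (fun i _ => hterm_int i y), hKgdef]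
      refine Finset.sum_congr rfl fun i _ => ?_
      have h1 : (fun z => g z * (c i * (A i ×ˢ B i).indicator 1 (y, z)))
          = fun z => (c i * (A i).indicator 1 y) * ((B i).indicator g z) := by
        funext z
        rw [hrect i y z]
        by_cases hz : z ∈ B i <;> simp [hz] <;> ring
      rw [h1, integral_const_mul, integral_indicator (hB i)]
      by_cases hy : y ∈ A i <;> simp [hy]
    -- put everything together
    have hKg_each : ∀ i,
        Integrable ((A i).indicator (fun _ => c i * ∫ z in B i, g z ∂μ)) (Phat x) :=
      fun i => (integrable_const _).indicator (hA i)
    have hKgint : Integrable Kg (Phat x) := by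
      rw [hKgdef]
      exact integrable_finset_sum _ (fun i _ => hKg_each i)
    have hPgint : Integrable (fun y => ∫ z, g z ∂Phat y) (Phat x) := by
      refine ⟨?_, ?_⟩
      · exact (StronglyMeasurable.integral_kernel_prod_right' (κ := κ)
          (f := fun p : X × X => g p.2)
          ((hg.comp measurable_snd).stronglyMeasurable)).aestronglyMeasurable
      · exact HasFiniteIntegral.of_bounded
          (Filter.Eventually.of_forall fun y => by
            rw [Real.norm_eq_abs]; exact hPgb y)
    have hsum_eq : ∑ i, (c i * (Phat x (A i)).toReal) * ∫ z in B i, g z ∂μ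
        = ∫ y, Kg y ∂Phat x := by
      rw [hKgdef, integral_finset_sum _ (fun i _ => hKg_each i)]
      refine Finset.sum_congr rfl fun i _ => ?_
      rw [integral_indicator_const _ (hA i)]
      simp only [smul_eq_mul, measureReal_def]
      ring
    have hmeasW : Measurable fun p : X × X =>
        ENNReal.ofReal (v p.2) * (‖(r p).toReal - k p‖₊ : ℝ≥0∞) :=
      ((hvmeas.comp measurable_snd).ennreal_ofReal).mul
        ((hrm.ennreal_toReal.sub hkm).enorm)
    have hfinal : (‖(∫ y, (∫ z, g z ∂Phat y) ∂Phat x)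
        - ∑ i, (c i * (Phat x (A i)).toReal) * ∫ z in B i, g z ∂μ‖₊ : ℝ≥0∞)
        ≤ ENNReal.ofReal ε := by
      rw [hsum_eq, ← integral_sub hPgint hKgint]
      calc (‖∫ y, ((∫ z, g z ∂Phat y) - Kg y) ∂Phat x‖₊ : ℝ≥0∞)
          ≤ ∫⁻ y, ‖(∫ z, g z ∂Phat y) - Kg y‖₊ ∂Phat x :=
            enorm_integral_le_lintegral_enorm _
        _ ≤ ∫⁻ y, ‖(∫ z, g z ∂Phat y) - Kg y‖₊ ∂μ := lintegral_mono' (hκle x) le_rfl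
        _ = ∫⁻ y, ‖(∫ z, g z * (r (y, z)).toReal ∂μ) - Kg y‖₊ ∂μ :=
            lintegral_congr_ae (haeq.mono fun y hy => by dsimp only; rw [hy])
        _ ≤ ∫⁻ y, ∫⁻ z, ENNReal.ofReal (v z) * ‖(r (y, z)).toReal - k (y, z)‖₊ ∂μ ∂μ := by
            apply lintegral_mono
            intro y
            dsimp only
            rw [hKg_int_eq y, ← integral_sub (hRint y) (hkint y)]
            have h3 : (fun z => g z * (r (y, z)).toReal - g z * k (y, z))
                = fun z => g z * ((r (y, z)).toReal - k (y, z)) := by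
              funext z; ring
            rw [h3]
            calc (‖∫ z, g z * ((r (y, z)).toReal - k (y, z)) ∂μ‖₊ : ℝ≥0∞)
                ≤ ∫⁻ z, ‖g z * ((r (y, z)).toReal - k (y, z))‖₊ ∂μ :=
                  enorm_integral_le_lintegral_enorm _
              _ ≤ ∫⁻ z, ENNReal.ofReal (v z) * ‖(r (y, z)).toReal - k (y, z)‖₊ ∂μ := by
                  apply lintegral_mono
                  intro z
                  dsimp only
                  rw [nnnorm_mul]
                  push_cast
                  exact mul_le_mul_left (hgb z) _
        _ = ∫⁻ p, ENNReal.ofReal (v p.2) * ‖(r p).toReal - k p‖₊ ∂ρ0 :=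
            (lintegral_prod _ hmeasW.aemeasurable).symm
        _ ≤ ENNReal.ofReal ε := hErr
    have habs : |(∫ y, (∫ z, g z ∂Phat y) ∂Phat x)
        - ∑ i, (c i * (Phat x (A i)).toReal) * ∫ z in B i, g z ∂μ| ≤ ε := by
      refine (ENNReal.ofReal_le_ofReal_iff hε.le).1 ?_
      rw [← Real.enorm_eq_ofReal_abs]
      exact hfinal
    calc |(∫ y, (∫ z, g z ∂Phat y) ∂Phat x)
        - ∑ i, (c i * (Phat x (A i)).toReal) * ∫ y, g y ∂μ.restrict (B i)| ≤ ε := habs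
      _ ≤ ε * v x := le_mul_of_one_le_right hε.le (hv x)
end

section
/- Let P be a Markov kernel admitting for each F in the relevant class a maximal eigenvalue λ(F) = e^{Λ(F)} with strictly positive eigenfunction f̌ = e^{F̌} solving P_f f̌ = λ(F) f̌ (the multiplicative Poisson equation H(F̌) = -F + Λ(F)). Define the twisted kernel P̌_{f̌}(x,A) = (∫_A P(x,dy) f̌(y)) / (P f̌(x)). Then P̌_{f̌} is a Markov transition kernel, and its eigenvalue functional satisfies the shift identity Λ̌(G) = Λ(F + G) − Λ(F) for all G in the class, via the similarity relation P̌_{f̌} = λ(F)^{-1} I_{f̌}^{-1} P_f I_{f̌}. -/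
open MeasureTheory ProbabilityTheory Filter
open scoped ENNReal

/-- Iterates of the scaled semigroup `Q_g = e^{G(x)} Q(x,dy)` applied to a weight
function `w` (in `ℝ≥0∞` to avoid integrability side conditions). -/
noncomputable def scIterM {X : Type*} [MeasurableSpace X] (Q : X → Measure X)
    (G w : X → ℝ) : ℕ → X → ℝ≥0∞
  | 0 => fun x => ENNReal.ofReal (w x)
  | n + 1 => fun x =>
      ENNReal.ofReal (Real.exp (G x)) * ∫⁻ y, scIterM Q G w n y ∂(Q x)

/-- The spectral radius of the scaled semigroup `{Q_g^n}` in `L∞^w`. -/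
noncomputable def specRadM {X : Type*} [MeasurableSpace X] (Q : X → Measure X)
    (G w : X → ℝ) : ℝ≥0∞ :=
  Filter.limsup
    (fun n : ℕ => (⨆ x, scIterM Q G w n x / ENNReal.ofReal (w x)) ^ ((1 : ℝ) / n))
    Filter.atTop

/-- The twisted kernel `P̌_{f̌}(x,A) = (∫_A f̌ dP(x,·)) / (P f̌ (x))` associated to a
positive eigenfunction `f̌` of the scaled kernel `P_f` with eigenvalue `λ = e^{Λ(F)}`
is a Markov transition kernel, and via the similarity
`P̌_{f̌} = λ⁻¹ I_{f̌}⁻¹ P_f I_{f̌}` its eigenvalue/spectral-radius functional, computed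
in the twisted weight `v̌ = v / f̌`, satisfies the shift identity
`Λ̌(G) = Λ(F+G) − Λ(F)` (stated multiplicatively). -/
theorem stmt13 {X : Type*} [MeasurableSpace X]
    (P : Kernel X X) [IsMarkovKernel P]
    (v : X → ℝ) (hv : ∀ x, 1 ≤ v x) (hvmeas : Measurable v)
    (F : X → ℝ) (hF : Measurable F)
    (fcheck : X → ℝ) (hfc : Measurable fcheck) (hfcpos : ∀ x, 0 < fcheck x)
    (hint : ∀ x, Integrable fcheck (P x))
    (lam : ℝ) (hlam : 0 < lam)
    (heig : ∀ x, Real.exp (F x) * ∫ y, fcheck y ∂(P x) = lam * fcheck x)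
    (Pcheck : X → Measure X)
    (hPcheck : ∀ x, Pcheck x = (P x).withDensity
        (fun y => ENNReal.ofReal (fcheck y / ∫ z, fcheck z ∂(P x)))) :
    (∀ x, IsProbabilityMeasure (Pcheck x)) ∧
      ∀ G : X → ℝ, Measurable G →
        specRadM Pcheck G (fun x => v x / fcheck x)
          = specRadM (fun x => (P x : Measure X)) (fun x => F x + G x) v
            / ENNReal.ofReal lam := by
  classical
  -- total mass of f̌ under P x
  set c : X → ℝ := fun x => ∫ z, fcheck z ∂(P x) with hc
  have hcpos : ∀ x, 0 < c x := by
    intro x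
    have h := heig x
    have : c x = lam * fcheck x / Real.exp (F x) := by
      field_simp [hc] at h ⊢
      linarith [h]
    rw [this]
    have := hfcpos x
    positivity
  have hlint : ∀ x, ∫⁻ y, ENNReal.ofReal (fcheck y) ∂(P x) = ENNReal.ofReal (c x) := by
    intro x
    rw [← ofReal_integral_eq_lintegral_ofReal (hint x)
      (Filter.Eventually.of_forall fun y => (hfcpos y).le)]
  have hprob : ∀ x, IsProbabilityMeasure (Pcheck x) := by
    intro x
    constructor
    rw [hPcheck x, withDensity_apply _ MeasurableSet.univ]
    have h1 : ∀ y, ENNReal.ofReal (fcheck y / c x)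
        = ENNReal.ofReal (c x)⁻¹ * ENNReal.ofReal (fcheck y) := by
      intro y
      rw [← ENNReal.ofReal_mul (p := (c x)⁻¹) (inv_nonneg.mpr (hcpos x).le)]
      congr 1
      field_simp
    simp_rw [Measure.restrict_univ, show ∀ y, ENNReal.ofReal (fcheck y / ∫ z, fcheck z ∂(P x)) = ENNReal.ofReal (c x)⁻¹ * ENNReal.ofReal (fcheck y) from h1]
    rw [lintegral_const_mul' _ _ ENNReal.ofReal_ne_top, hlint x,
      ← ENNReal.ofReal_mul (p := (c x)⁻¹) (inv_nonneg.mpr (hcpos x).le),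
      inv_mul_cancel₀ (hcpos x).ne']
    simp
  refine ⟨hprob, ?_⟩
  intro G hG
  set L : ℝ≥0∞ := ENNReal.ofReal lam with hL
  have hL0 : L ≠ 0 := (ENNReal.ofReal_pos.mpr hlam).ne'
  set A : ℕ → X → ℝ≥0∞ := scIterM (fun x => (P x : Measure X)) (fun x => F x + G x) v with hA
  -- key conjugation identity
  have key : ∀ n x, scIterM Pcheck G (fun x => v x / fcheck x) n x
      = A n x * ENNReal.ofReal (1 / (lam ^ n * fcheck x)) := by
    intro n
    induction n with
    | zero =>
      intro x
      show ENNReal.ofReal (v x / fcheck x) = ENNReal.ofReal (v x) * _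
      rw [← ENNReal.ofReal_mul (p := v x) (by linarith [hv x])]
      congr 1
      have := (hfcpos x).ne'
      field_simp
    | succ n ih =>
      intro x
      show ENNReal.ofReal (Real.exp (G x)) * ∫⁻ y, scIterM Pcheck G _ n y ∂(Pcheck x) = _
      have hmeasg : Measurable fun y => ENNReal.ofReal (fcheck y / c x) :=
        (hfc.div_const _).ennreal_ofReal
      rw [hPcheck x, lintegral_withDensity_eq_lintegral_mul_non_measurable _ hmeasg
        (Filter.Eventually.of_forall fun y => ENNReal.ofReal_lt_top)]
      have hintg : ∀ y, ENNReal.ofReal (fcheck y / c x) *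
            scIterM Pcheck G (fun x => v x / fcheck x) n y
          = ENNReal.ofReal (1 / (lam ^ n * c x)) * A n y := by
        intro y
        rw [ih y, mul_comm (ENNReal.ofReal (fcheck y / c x)), mul_assoc,
          ← ENNReal.ofReal_mul (p := 1 / (lam ^ n * fcheck y))
            (by have := hfcpos y; positivity),
          mul_comm (A n y)]
        congr 2
        have h2 := (hcpos x).ne'
        have h3 := (hfcpos y).ne'
        have h4 := hlam.ne'
        field_simp
      have hAsucc : A (n + 1) x
          = ENNReal.ofReal (Real.exp (F x + G x)) * ∫⁻ y, A n y ∂(P x) := rfl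
      have hconst : ENNReal.ofReal (Real.exp (G x)) * ENNReal.ofReal (1 / (lam ^ n * c x))
          = ENNReal.ofReal (Real.exp (F x + G x))
            * ENNReal.ofReal (1 / (lam ^ (n + 1) * fcheck x)) := by
        rw [← ENNReal.ofReal_mul (Real.exp_nonneg _), ← ENNReal.ofReal_mul (Real.exp_nonneg _)]
        congr 1
        have h : Real.exp (F x) * c x = lam * fcheck x := heig x
        have hc2 := hcpos x
        have hf2 := hfcpos x
        rw [Real.exp_add, mul_one_div, mul_one_div,
          div_eq_div_iff (by positivity) (by positivity)]
        linear_combination (-(lam ^ n * Real.exp (G x))) * h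
      calc ENNReal.ofReal (Real.exp (G x)) * ∫⁻ y,
              ((fun y => ENNReal.ofReal (fcheck y / c x)) *
                fun y => scIterM Pcheck G (fun x => v x / fcheck x) n y) y ∂(P x)
          = ENNReal.ofReal (Real.exp (G x)) *
              ∫⁻ y, ENNReal.ofReal (1 / (lam ^ n * c x)) * A n y ∂(P x) := by
            congr 1
            exact lintegral_congr fun y => hintg y
        _ = ENNReal.ofReal (Real.exp (G x)) * (ENNReal.ofReal (1 / (lam ^ n * c x)) *
              ∫⁻ y, A n y ∂(P x)) := by
            rw [lintegral_const_mul' _ _ ENNReal.ofReal_ne_top]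
        _ = A (n + 1) x * ENNReal.ofReal (1 / (lam ^ (n + 1) * fcheck x)) := by
            rw [hAsucc, ← mul_assoc, hconst]; ring
  -- supremum identity
  have hsup : ∀ n : ℕ, (⨆ x, scIterM Pcheck G (fun x => v x / fcheck x) n x
        / ENNReal.ofReal (v x / fcheck x))
      = (⨆ x, A n x / ENNReal.ofReal (v x)) / L ^ n := by
    intro n
    rw [ENNReal.iSup_div]
    refine iSup_congr fun x => ?_
    have hx1 : ENNReal.ofReal (1 / (lam ^ n * fcheck x)) / ENNReal.ofReal (v x / fcheck x)
        = (ENNReal.ofReal (v x))⁻¹ * (L ^ n)⁻¹ := by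
      have hv0 : (0:ℝ) < v x := lt_of_lt_of_le one_pos (hv x)
      have hf2 := hfcpos x
      rw [hL, ← ENNReal.ofReal_pow hlam.le,
        ← ENNReal.ofReal_div_of_pos (by positivity),
        ← ENNReal.ofReal_inv_of_pos (by positivity),
        ← ENNReal.ofReal_inv_of_pos (by positivity),
        ← ENNReal.ofReal_mul (p := (v x)⁻¹) (by positivity)]
      congr 1
      have h3 := (hfcpos x).ne'
      have h4 := hlam.ne'
      field_simp
    calc scIterM Pcheck G (fun x => v x / fcheck x) n x / ENNReal.ofReal (v x / fcheck x)
        = A n x * (ENNReal.ofReal (1 / (lam ^ n * fcheck x))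
            / ENNReal.ofReal (v x / fcheck x)) := by
          rw [key n x, mul_div_assoc]
      _ = A n x * ((ENNReal.ofReal (v x))⁻¹ * (L ^ n)⁻¹) := by rw [hx1]
      _ = A n x / ENNReal.ofReal (v x) / L ^ n := by
          rw [div_eq_mul_inv, div_eq_mul_inv, mul_assoc]
  -- pass to spectral radii
  simp only [specRadM]
  have heq : ∀ᶠ n : ℕ in atTop,
      (⨆ x, scIterM Pcheck G (fun x => v x / fcheck x) n x
        / ENNReal.ofReal (v x / fcheck x)) ^ ((1:ℝ) / n)
      = (⨆ x, A n x / ENNReal.ofReal (v x)) ^ ((1:ℝ) / n) / L := by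
    filter_upwards [eventually_ge_atTop 1] with n hn
    rw [hsup n, ENNReal.div_rpow_of_nonneg _ _ (by positivity)]
    congr 1
    rw [← ENNReal.rpow_natCast L n, ← ENNReal.rpow_mul,
      mul_one_div, div_self (by exact_mod_cast (by omega : n ≠ 0)), ENNReal.rpow_one]
  rw [limsup_congr heq]
  simp_rw [div_eq_mul_inv, mul_comm _ L⁻¹]
  rw [ENNReal.limsup_const_mul_of_ne_top (by simpa using hL0), mul_comm]
end

section
/- Let P have invariant probability π and suppose the log-eigenvalue functional Λ on L∞^{W₀} is Gateaux differentiable at 0 along every F with Λ(tF) = tπ(F) + O(t²), and let Λ* be its convex dual on probability measures. If there exists B₀ < ∞ such that Λ(εF) ≤ επ(F) + ½B₀ε² for all ‖F‖_{W₀} ≤ 1 and ε ∈ [0,1], then there exists ε₀ > 0 such that Λ*(μ) ≥ ε₀ ‖μ − π‖²_{W₀} / (1 + ‖μ − π‖_{W₀}) for every probability measure μ ∈ M₁^{W₀}. -/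
open MeasureTheory

/-- A quadratic upper bound `Λ(εF) ≤ ε π(F) + ½ B₀ ε²` for the log-eigenvalue
functional on the unit ball of `L∞^{W₀}` implies the lower bound
`Λ*(μ) ≥ ε₀ ‖μ−π‖²_{W₀} / (1 + ‖μ−π‖_{W₀})` for the convex dual, uniformly over
probability measures `μ ∈ M₁^{W₀}`. -/
theorem stmt19 {X : Type*} [MeasurableSpace X]
    (W₀ : X → ℝ) (hW₀ : ∀ x, 1 ≤ W₀ x) (hW₀meas : Measurable W₀)
    (π : Measure X) [IsProbabilityMeasure π] (hW₀π : Integrable W₀ π)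
    (Λ : (X → ℝ) → ℝ) (B₀ : ℝ)
    (hB : ∀ F : X → ℝ, Measurable F → (∀ x, |F x| ≤ W₀ x) →
      ∀ ε : ℝ, 0 ≤ ε → ε ≤ 1 →
        Λ (fun x => ε * F x) ≤ ε * ∫ x, F x ∂π + B₀ * ε ^ 2 / 2) :
    ∃ ε₀ : ℝ, 0 < ε₀ ∧
      ∀ μ : Measure X, IsProbabilityMeasure μ → Integrable W₀ μ →
        ((ε₀ * (⨆ F : {F : X → ℝ // Measurable F ∧ ∀ x, |F x| ≤ W₀ x},
              |(∫ x, F.1 x ∂μ) - ∫ x, F.1 x ∂π|) ^ 2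
            / (1 + ⨆ F : {F : X → ℝ // Measurable F ∧ ∀ x, |F x| ≤ W₀ x},
              |(∫ x, F.1 x ∂μ) - ∫ x, F.1 x ∂π|) : ℝ) : EReal)
          ≤ ⨆ F : {F : X → ℝ // Measurable F ∧ ∀ x, |F x| ≤ W₀ x},
              (((∫ x, F.1 x ∂μ) - Λ F.1 : ℝ) : EReal) := by
  classical
  set B := max B₀ 0 with hBdef
  have hB0 : (0:ℝ) ≤ B := le_max_right _ _
  have hB1 : (0:ℝ) < 1 + B := by linarith
  refine ⟨1 / (2 * (1 + B)), by positivity, ?_⟩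
  intro μ hμ hW₀μ
  have hzero : ∀ x, |(0:ℝ)| ≤ W₀ x := fun x => by
    simpa using le_trans zero_le_one (hW₀ x)
  haveI hne : Nonempty {F : X → ℝ // Measurable F ∧ ∀ x, |F x| ≤ W₀ x} :=
    ⟨⟨fun _ => 0, measurable_const, hzero⟩⟩
  set D := ⨆ F : {F : X → ℝ // Measurable F ∧ ∀ x, |F x| ≤ W₀ x},
      |(∫ x, F.1 x ∂μ) - ∫ x, F.1 x ∂π| with hD
  have hintμ : ∀ F : {F : X → ℝ // Measurable F ∧ ∀ x, |F x| ≤ W₀ x},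
      Integrable F.1 μ := fun F =>
    hW₀μ.mono' F.2.1.aestronglyMeasurable (Filter.Eventually.of_forall fun x => by
      simpa [Real.norm_eq_abs] using F.2.2 x)
  have hintπ : ∀ F : {F : X → ℝ // Measurable F ∧ ∀ x, |F x| ≤ W₀ x},
      Integrable F.1 π := fun F =>
    hW₀π.mono' F.2.1.aestronglyMeasurable (Filter.Eventually.of_forall fun x => by
      simpa [Real.norm_eq_abs] using F.2.2 x)
  have hbdd : BddAbove (Set.range fun F : {F : X → ℝ // Measurable F ∧ ∀ x, |F x| ≤ W₀ x} =>
      |(∫ x, F.1 x ∂μ) - ∫ x, F.1 x ∂π|) := by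
    refine ⟨(∫ x, W₀ x ∂μ) + ∫ x, W₀ x ∂π, ?_⟩
    rintro _ ⟨F, rfl⟩
    have h1 : |∫ x, F.1 x ∂μ| ≤ ∫ x, W₀ x ∂μ := by
      rw [← Real.norm_eq_abs]
      refine le_trans (norm_integral_le_integral_norm _) ?_
      refine integral_mono (hintμ F).norm hW₀μ (fun x => ?_)
      simpa [Real.norm_eq_abs] using F.2.2 x
    have h2 : |∫ x, F.1 x ∂π| ≤ ∫ x, W₀ x ∂π := by
      rw [← Real.norm_eq_abs]
      refine le_trans (norm_integral_le_integral_norm _) ?_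
      refine integral_mono (hintπ F).norm hW₀π (fun x => ?_)
      simpa [Real.norm_eq_abs] using F.2.2 x
    calc |(∫ x, F.1 x ∂μ) - ∫ x, F.1 x ∂π| ≤ |∫ x, F.1 x ∂μ| + |∫ x, F.1 x ∂π| :=
      abs_sub _ _
    _ ≤ _ := add_le_add h1 h2
  have hD0 : 0 ≤ D := by
    have := le_ciSup hbdd (⟨fun _ => 0, measurable_const, hzero⟩ :
      {F : X → ℝ // Measurable F ∧ ∀ x, |F x| ≤ W₀ x})
    simpa using le_trans (abs_nonneg _) this
  have hD1 : (0:ℝ) < 1 + D := by linarith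
  -- key step
  have key : ∀ ε : ℝ, 0 ≤ ε → ε ≤ 1 →
      ((ε * D - B * ε ^ 2 / 2 : ℝ) : EReal)
        ≤ ⨆ F : {F : X → ℝ // Measurable F ∧ ∀ x, |F x| ≤ W₀ x},
            (((∫ x, F.1 x ∂μ) - Λ F.1 : ℝ) : EReal) := by
    intro ε hε hε1
    rw [le_iSup_iff]
    intro b hb
    induction b with
    | bot =>
        exact absurd (hb ⟨fun _ => 0, measurable_const, hzero⟩) (by simp)
    | top => exact le_top
    | coe r =>
        rw [EReal.coe_le_coe_iff]
        have hb' : ∀ F : {F : X → ℝ // Measurable F ∧ ∀ x, |F x| ≤ W₀ x},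
            (∫ x, F.1 x ∂μ) - Λ F.1 ≤ r := fun F => EReal.coe_le_coe_iff.mp (hb F)
        have step1 : ∀ F : {F : X → ℝ // Measurable F ∧ ∀ x, |F x| ≤ W₀ x},
            ε * ((∫ x, F.1 x ∂μ) - ∫ x, F.1 x ∂π) ≤ r + B * ε ^ 2 / 2 := by
          intro F
          have hGmem : ∀ x, |ε * F.1 x| ≤ W₀ x := fun x => by
            rw [abs_mul, abs_of_nonneg hε]
            calc ε * |F.1 x| ≤ 1 * |F.1 x| := by
                  apply mul_le_mul_of_nonneg_right hε1 (abs_nonneg _)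
            _ = |F.1 x| := one_mul _
            _ ≤ W₀ x := F.2.2 x
          have hG := hb' ⟨fun x => ε * F.1 x, F.2.1.const_mul ε, hGmem⟩
          have hμG : (∫ x, ε * F.1 x ∂μ) = ε * ∫ x, F.1 x ∂μ := integral_const_mul ε F.1
          have hΛ := hB F.1 F.2.1 F.2.2 ε hε hε1
          have hBB : B₀ * ε ^ 2 / 2 ≤ B * ε ^ 2 / 2 := by
            have : B₀ ≤ B := le_max_left _ _
            nlinarith [sq_nonneg ε]
          simp only [hμG] at hG
          nlinarith
        have step2 : ∀ F : {F : X → ℝ // Measurable F ∧ ∀ x, |F x| ≤ W₀ x},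
            ε * |(∫ x, F.1 x ∂μ) - ∫ x, F.1 x ∂π| ≤ r + B * ε ^ 2 / 2 := by
          intro F
          rcases abs_cases ((∫ x, F.1 x ∂μ) - ∫ x, F.1 x ∂π) with ⟨h, _⟩ | ⟨h, _⟩
          · rw [h]; exact step1 F
          · rw [h]
            have hNmem : ∀ x, |(-F.1) x| ≤ W₀ x := fun x => by
              simpa using F.2.2 x
            have := step1 ⟨-F.1, F.2.1.neg, hNmem⟩
            have hμN : (∫ x, (-F.1) x ∂μ) = - ∫ x, F.1 x ∂μ := by
              simpa using integral_neg F.1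
            have hπN : (∫ x, (-F.1) x ∂π) = - ∫ x, F.1 x ∂π := by
              simpa using integral_neg F.1
            simp only [hμN, hπN] at this
            linarith
        have hεD : ε * D ≤ r + B * ε ^ 2 / 2 := by
          rcases eq_or_lt_of_le hε with h0 | h0
          · have := step2 ⟨fun _ => 0, measurable_const, hzero⟩
            simp only [← h0] at this ⊢
            simpa using this
          · have hDle : D ≤ (r + B * ε ^ 2 / 2) / ε := by
              rw [hD]
              refine ciSup_le fun F => ?_
              rw [le_div_iff₀ h0]
              calc |(∫ x, F.1 x ∂μ) - ∫ x, F.1 x ∂π| * ε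
                  = ε * |(∫ x, F.1 x ∂μ) - ∫ x, F.1 x ∂π| := mul_comm _ _
                _ ≤ _ := step2 F
            calc ε * D ≤ ε * ((r + B * ε ^ 2 / 2) / ε) := by
                  exact mul_le_mul_of_nonneg_left hDle hε
            _ = r + B * ε ^ 2 / 2 := by field_simp
        linarith
  -- apply key at ε = D / ((1+B)*(1+D))
  set ε : ℝ := D / ((1 + B) * (1 + D)) with hεdef
  have hε0 : 0 ≤ ε := by positivity
  have hε1 : ε ≤ 1 := by
    rw [hεdef, div_le_one (by positivity)]
    nlinarith
  have hkey := key ε hε0 hε1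
  refine le_trans ?_ hkey
  rw [EReal.coe_le_coe_iff]
  have expand : ε * D - B * ε ^ 2 / 2
      = D ^ 2 / ((1 + B) * (1 + D)) - B * D ^ 2 / (2 * ((1 + B) * (1 + D)) ^ 2) := by
    rw [hεdef]; field_simp
  have h1 : (0:ℝ) < (1 + B) * (1 + D) := by positivity
  have hBle : B ≤ (1 + B) * (1 + D) := by nlinarith
  have lhs_eq : 1 / (2 * (1 + B)) * D ^ 2 / (1 + D) = D ^ 2 / (2 * ((1 + B) * (1 + D))) := by
    field_simp
  rw [expand, lhs_eq,
    div_sub_div _ _ (ne_of_gt h1) (by positivity : (2 * ((1 + B) * (1 + D)) ^ 2 : ℝ) ≠ 0),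
    div_le_div_iff₀ (by positivity) (by positivity)]
  nlinarith [mul_le_mul_of_nonneg_left hBle
    (mul_nonneg (mul_pos h1 h1).le (sq_nonneg D)), mul_pos h1 h1, sq_nonneg D,
    mul_nonneg (mul_nonneg (mul_pos h1 h1).le h1.le) (sq_nonneg D)]
end
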